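/- arXiv:1109.3899 — 5 statements merged into one kernel-verified Lean document; each statement's English description precedes it below -/
import Mathlib

section
/- Under the equivalence relation ∼ generated by the five order-preserving facet gluings, all 10 vertices of the two pentachora (5 green and 5 red) lie in a single equivalence class; i.e., the quotient of the vertex set by ∼ has exactly one element. -/
/-- A face of one of the two pentachora: a colour (`false` = green, `true` = red)
together with a set of vertices (the faces are the pairs whose vertex set is nonempty). -/
abbrev Face : Type := Bool × Finset (Fin 5)

/-- The five order-preserving facet gluings, applied to every nonempty subface of the
source tetrahedron:
green 0124 → red 1234, green 0134 → red 0123, red 0124 → green 0234,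
green 1234 → red 0134, green 0123 → red 0234.
Each vertex map below is the unique order-preserving bijection between the two
4-element vertex sets (entries outside the source set are irrelevant dummies). -/
def glue : Face → Face → Prop := fun x y =>
  (x.1 = false ∧ y.1 = true ∧ x.2.Nonempty ∧ x.2 ⊆ ({0,1,2,4} : Finset (Fin 5)) ∧
    y.2 = x.2.image ![1,2,3,0,4]) ∨
  (x.1 = false ∧ y.1 = true ∧ x.2.Nonempty ∧ x.2 ⊆ ({0,1,3,4} : Finset (Fin 5)) ∧
    y.2 = x.2.image ![0,1,0,2,3]) ∨
  (x.1 = true ∧ y.1 = false ∧ x.2.Nonempty ∧ x.2 ⊆ ({0,1,2,4} : Finset (Fin 5)) ∧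
    y.2 = x.2.image ![0,2,3,0,4]) ∨
  (x.1 = false ∧ y.1 = true ∧ x.2.Nonempty ∧ x.2 ⊆ ({1,2,3,4} : Finset (Fin 5)) ∧
    y.2 = x.2.image ![0,0,1,3,4]) ∨
  (x.1 = false ∧ y.1 = true ∧ x.2.Nonempty ∧ x.2 ⊆ ({0,1,2,3} : Finset (Fin 5)) ∧
    y.2 = x.2.image ![0,2,3,4,0])


open Relation in
private lemma key : ∀ (c : Bool) (v : Fin 5),
    Relation.EqvGen glue (c, ({v} : Finset (Fin 5))) (false, ({0} : Finset (Fin 5))) := by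
  have e1 : glue (false,{0}) (true,{1}) := by unfold glue; decide
  have e2 : glue (false,{1}) (true,{2}) := by unfold glue; decide
  have e3 : glue (false,{2}) (true,{3}) := by unfold glue; decide
  have e4 : glue (false,{4}) (true,{4}) := by unfold glue; decide
  have e5 : glue (false,{0}) (true,{0}) := by unfold glue; decide
  have e6 : glue (false,{3}) (true,{2}) := by unfold glue; decide
  have e7 : glue (false,{4}) (true,{3}) := by unfold glue; decide
  have e8 : glue (true,{1}) (false,{2}) := by unfold glue; decide
  have e10 : glue (false,{3}) (true,{4}) := by unfold glue; decide
  have R := fun {a b} (h : glue a b) => EqvGen.rel (r := glue) a b h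
  have hG0 : EqvGen glue (false, ({0}:Finset (Fin 5))) (false,{0}) := EqvGen.refl _
  have hR1 := EqvGen.symm _ _ (R e1)
  have hR0 := EqvGen.symm _ _ (R e5)
  have hG2 := EqvGen.trans _ _ _ (EqvGen.symm _ _ (R e8)) hR1
  have hR3 := EqvGen.trans _ _ _ (EqvGen.symm _ _ (R e3)) hG2
  have hG4 := EqvGen.trans _ _ _ (R e7) hR3
  have hR4 := EqvGen.trans _ _ _ (EqvGen.symm _ _ (R e4)) hG4
  have hG3 := EqvGen.trans _ _ _ (R e10) hR4
  have hR2 := EqvGen.trans _ _ _ (EqvGen.symm _ _ (R e6)) hG3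
  have hG1 := EqvGen.trans _ _ _ (R e2) hR2
  intro c v
  fin_cases c <;> fin_cases v <;>
    first
      | exact hG0 | exact hG1 | exact hG2 | exact hG3 | exact hG4
      | exact hR0 | exact hR1 | exact hR2 | exact hR3 | exact hR4

/-- All 10 vertices of the two pentachora are identified to a single point by the
equivalence relation generated by the five facet gluings. -/
theorem all_vertices_identified :
    ∀ (c c' : Bool) (v v' : Fin 5),
      Relation.EqvGen glue (c, ({v} : Finset (Fin 5))) (c', ({v'} : Finset (Fin 5))) := by
  intro c c' v v'
  exact (key c v).trans _ _ _ ((key c' v').symm _ _)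
end

section
/- The abelianization of G is infinite cyclic: there is a group isomorphism from the abelianization of G to ℤ sending the class of a to −1 and the class of b to 1. -/
/-- The generator `a` of the free group on two generators. -/
def fa : FreeGroup (Fin 2) := FreeGroup.of 0
/-- The generator `b` of the free group on two generators. -/
def fb : FreeGroup (Fin 2) := FreeGroup.of 1

/-- The two relators `(b·a²)·(a³·b²)⁻¹` and `(b²·a)·(a²·b³)⁻¹`. -/
def csRels : Set (FreeGroup (Fin 2)) :=
  {(fb * fa ^ 2) * (fa ^ 3 * fb ^ 2)⁻¹, (fb ^ 2 * fa) * (fa ^ 2 * fb ^ 3)⁻¹}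

/-- The group `G = ⟨a, b ∣ b·a² = a³·b², b²·a = a²·b³⟩`. -/
abbrev G : Type := PresentedGroup csRels

/-- The image of `a` in `G`. -/
def ga : G := PresentedGroup.of 0
/-- The image of `b` in `G`. -/
def gb : G := PresentedGroup.of 1

def csToZf : Fin 2 → Multiplicative ℤ := ![Multiplicative.ofAdd (-1), Multiplicative.ofAdd 1]

lemma rels_hold : ∀ r ∈ csRels, FreeGroup.lift csToZf r = 1 := by
  intro r hr
  rcases hr with h | h <;> subst h <;>
    simp [fa, fb, csToZf] <;> decide

def csToZ : G →* Multiplicative ℤ := PresentedGroup.toGroup rels_hold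

lemma csToZ_ga : csToZ ga = Multiplicative.ofAdd (-1) := by
  simp [csToZ, ga, PresentedGroup.toGroup.of, csToZf]

lemma csToZ_gb : csToZ gb = Multiplicative.ofAdd 1 := by
  simp [csToZ, gb, PresentedGroup.toGroup.of, csToZf]

lemma key_s5 : Abelianization.of ga * Abelianization.of gb = 1 := by
  have hr : ((fb * fa ^ 2) * (fa ^ 3 * fb ^ 2)⁻¹ : FreeGroup (Fin 2)) ∈
      Subgroup.normalClosure csRels :=
    Subgroup.subset_normalClosure (Or.inl rfl)
  have h1 : (QuotientGroup.mk ((fb * fa ^ 2) * (fa ^ 3 * fb ^ 2)⁻¹) : G) = 1 :=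
    (QuotientGroup.eq_one_iff _).2 hr
  have hmk : (QuotientGroup.mk (fb * fa ^ 2) : G) = QuotientGroup.mk (fa ^ 3 * fb ^ 2) := by
    rwa [QuotientGroup.mk_mul, QuotientGroup.mk_inv, mul_inv_eq_one] at h1
  have hG : gb * ga ^ 2 = ga ^ 3 * gb ^ 2 := by
    exact hmk
  have h2 : Abelianization.of gb * (Abelianization.of ga) ^ 2 =
      (Abelianization.of ga) ^ 3 * (Abelianization.of gb) ^ 2 := by
    simpa using congrArg Abelianization.of hG
  set A := Abelianization.of ga
  set B := Abelianization.of gb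
  have hx : Additive.ofMul (B * A ^ 2) = Additive.ofMul (A ^ 3 * B ^ 2) := congrArg _ h2
  set x := Additive.ofMul A
  set y := Additive.ofMul B
  have hx' : y + (2:ℤ) • x = (3:ℤ) • x + (2:ℤ) • y := by
    simpa [ofMul_mul, ofMul_pow, zsmul_eq_smul, x, y, ← natCast_zsmul] using hx
  have : x + y = 0 := by
    have h3 : x + y = ((3:ℤ) • x + (2:ℤ) • y) - (y + (2:ℤ) • x) := by abel
    rw [← hx', sub_self] at h3
    exact h3
  have := congrArg Additive.toMul this
  simpa [← ofMul_mul, x, y] using this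

/-- The abelianization of `G` is infinite cyclic, via an isomorphism sending the class of
`a` to `−1 ∈ ℤ` and the class of `b` to `1 ∈ ℤ`. -/
theorem abelianization_infinite_cyclic :
    ∃ ψ : Abelianization G ≃* Multiplicative ℤ,
      ψ (Abelianization.of ga) = Multiplicative.ofAdd (-1) ∧
      ψ (Abelianization.of gb) = Multiplicative.ofAdd 1 := by
  let ψ : Abelianization G →* Multiplicative ℤ := Abelianization.lift csToZ
  let φ : Multiplicative ℤ →* Abelianization G := zpowersHom _ (Abelianization.of gb)
  have hψa : ψ (Abelianization.of ga) = Multiplicative.ofAdd (-1) := by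
    simp [ψ, Abelianization.lift_apply_of, csToZ_ga]
  have hψb : ψ (Abelianization.of gb) = Multiplicative.ofAdd 1 := by
    simp [ψ, Abelianization.lift_apply_of, csToZ_gb]
  have h2 : ψ.comp φ = MonoidHom.id _ := by
    apply MonoidHom.ext_mint
    simp [φ, hψb]
  have hAB : Abelianization.of ga = (Abelianization.of gb)⁻¹ :=
    mul_eq_one_iff_eq_inv.mp key_s5
  have h1 : φ.comp ψ = MonoidHom.id _ := by
    apply Abelianization.hom_ext
    apply PresentedGroup.ext
    intro x
    fin_cases x
    · show φ (ψ (Abelianization.of ga)) = Abelianization.of ga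
      rw [hψa, hAB]
      simp [φ]
    · show φ (ψ (Abelianization.of gb)) = Abelianization.of gb
      rw [hψb]
      simp [φ]
  exact ⟨MonoidHom.toMulEquiv ψ φ h1 h2, hψa, hψb⟩
end

section
/- The quotient of G by the normal closure of the singleton {a} is the trivial group; i.e., the element a normally generates G. -/
lemma rel1 : (gb * ga ^ 2) * (ga ^ 3 * gb ^ 2)⁻¹ = 1 := by
  have h : (fb * fa ^ 2) * (fa ^ 3 * fb ^ 2)⁻¹ ∈ Subgroup.normalClosure csRels :=
    Subgroup.subset_normalClosure (Or.inl rfl)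
  exact (QuotientGroup.eq_one_iff _).2 h

/-- The quotient of `G` by the normal closure of `{a}` is the trivial group;
i.e. `a` normally generates `G`. -/
theorem a_normally_generates :
    ∀ x : G ⧸ Subgroup.normalClosure ({ga} : Set G), x = 1 := by
  set N := Subgroup.normalClosure ({ga} : Set G)
  let π : G →* G ⧸ N := QuotientGroup.mk' N
  have ha : π ga = 1 := (QuotientGroup.eq_one_iff _).2
    (Subgroup.subset_normalClosure rfl)
  have hb : π gb = 1 := by
    have h1 : π ((gb * ga ^ 2) * (ga ^ 3 * gb ^ 2)⁻¹) = 1 := by rw [rel1, map_one]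
    simp only [map_mul, map_inv, map_pow, ha] at h1
    group at h1
    rwa [zpow_neg, zpow_one, inv_eq_one] at h1
  intro x
  obtain ⟨g, rfl⟩ := QuotientGroup.mk'_surjective N x
  change π g = 1
  obtain ⟨z, rfl⟩ := PresentedGroup.mk_surjective csRels g
  induction z using FreeGroup.induction_on with
  | C1 => simp
  | of i => fin_cases i <;> [exact ha; exact hb]
  | inv_of i ih => rw [map_inv, map_inv, ih, inv_one]
  | mul x y hx hy => rw [map_mul, map_mul, hx, hy, one_mul]
end

section
/- In the semidirect product P = ℤ³ ⋊_A ℤ (where 1 ∈ ℤ acts on ℤ³ by v ↦ A·v), the commutator subgroup of P equals the canonical copy of ℤ³ (the elements with trivial ℤ-coordinate); equivalently, the endomorphism v ↦ A·v − v of ℤ³ is bijective, having determinant −1. Consequently the abelianization of P is infinite cyclic. -/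
/-- The Cappell–Shaneson matrix `A` with rows `(0,0,1)`, `(1,0,0)`, `(0,1,−1)`. -/
def csMatrix : Matrix (Fin 3) (Fin 3) ℤ := !![0, 0, 1; 1, 0, 0; 0, 1, -1]

/-- The inverse of `csMatrix` over `ℤ`. -/
def csMatrixInv : Matrix (Fin 3) (Fin 3) ℤ := !![0, 1, 0; 1, 0, 1; 1, 0, 0]

/-- The automorphism `v ↦ A·v` of `ℤ³`. -/
def csAut : (Fin 3 → ℤ) ≃+ (Fin 3 → ℤ) where
  toFun := csMatrix.mulVec
  invFun := csMatrixInv.mulVec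
  left_inv v := by
    rw [Matrix.mulVec_mulVec]
    have : csMatrixInv * csMatrix = 1 := by decide
    rw [this, Matrix.one_mulVec]
  right_inv v := by
    rw [Matrix.mulVec_mulVec]
    have : csMatrix * csMatrixInv = 1 := by decide
    rw [this, Matrix.one_mulVec]
  map_add' x y := Matrix.mulVec_add csMatrix x y

/-- The action of `ℤ` on `ℤ³` in which `1` acts by `v ↦ A·v`, packaged multiplicatively. -/
def csAction : Multiplicative ℤ →* MulAut (Multiplicative (Fin 3 → ℤ)) :=
  zpowersHom _ (AddEquiv.toMultiplicative csAut)

/-- The semidirect product `ℤ³ ⋊_A ℤ`. -/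
abbrev CSP : Type :=
  SemidirectProduct (Multiplicative (Fin 3 → ℤ)) (Multiplicative ℤ) csAction

/-- Inverse of `csMatrix - 1` over `ℤ`. -/
def csSubInv : Matrix (Fin 3) (Fin 3) ℤ := !![-2,-1,-1;-2,-2,-1;-1,-1,-1]

lemma cs_sub_eq_mulVec (v : Fin 3 → ℤ) :
    csMatrix.mulVec v - v = (csMatrix - 1).mulVec v := by
  rw [Matrix.sub_mulVec, Matrix.one_mulVec]

lemma cs_bij : Function.Bijective (fun v : Fin 3 → ℤ => csMatrix.mulVec v - v) := by
  have h1 : (csMatrix - 1) * csSubInv = 1 := by decide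
  have h2 : csSubInv * (csMatrix - 1) = 1 := by decide
  constructor
  · intro x y hxy
    simp only [cs_sub_eq_mulVec] at hxy
    have := congrArg csSubInv.mulVec hxy
    simpa [Matrix.mulVec_mulVec, h2, Matrix.one_mulVec] using this
  · intro v
    refine ⟨csSubInv.mulVec v, ?_⟩
    show csMatrix.mulVec (csSubInv.mulVec v) - csSubInv.mulVec v = v
    rw [cs_sub_eq_mulVec, Matrix.mulVec_mulVec, h1, Matrix.one_mulVec]

lemma cs_act_one (w : Fin 3 → ℤ) :
    csAction (Multiplicative.ofAdd 1) (Multiplicative.ofAdd w)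
      = Multiplicative.ofAdd (csMatrix.mulVec w) := by
  simp [csAction, csAut]

open scoped commutatorElement in
lemma cs_comm_key (w : Fin 3 → ℤ) :
    ⁅(SemidirectProduct.inr (Multiplicative.ofAdd (1:ℤ)) : CSP),
      (SemidirectProduct.inl (Multiplicative.ofAdd w) : CSP)⁆
      = (SemidirectProduct.inl (Multiplicative.ofAdd (csMatrix.mulVec w - w)) : CSP) := by
  rw [commutatorElement_def, ← map_inv SemidirectProduct.inr,
    ← SemidirectProduct.inl_aut, ← map_inv SemidirectProduct.inl,
    ← map_mul, cs_act_one, ← ofAdd_neg, ← ofAdd_add, ← sub_eq_add_neg]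

/-- In `P = ℤ³ ⋊_A ℤ`, the commutator subgroup equals the canonical copy of `ℤ³`;
equivalently the endomorphism `v ↦ A·v − v` of `ℤ³` is bijective, with determinant `−1`;
consequently the abelianization of `P` is infinite cyclic. -/
theorem commutator_csp_eq_inl_range :
    commutator CSP =
      (SemidirectProduct.inl : Multiplicative (Fin 3 → ℤ) →* CSP).range ∧
    Function.Bijective (fun v : Fin 3 → ℤ => csMatrix.mulVec v - v) ∧
    (csMatrix - 1).det = -1 ∧
    Nonempty (Abelianization CSP ≃* Multiplicative ℤ) := by
  have hcomm : commutator CSP =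
      (SemidirectProduct.inl : Multiplicative (Fin 3 → ℤ) →* CSP).range := by
    apply le_antisymm
    · rw [SemidirectProduct.range_inl_eq_ker_rightHom]
      exact Abelianization.commutator_subset_ker SemidirectProduct.rightHom
    · rintro _ ⟨n, rfl⟩
      obtain ⟨w, hw⟩ := cs_bij.2 (Multiplicative.toAdd n)
      have hw' : csMatrix.mulVec w - w = Multiplicative.toAdd n := hw
      have hn : n = Multiplicative.ofAdd (csMatrix.mulVec w - w) := by
        rw [hw']; rfl
      rw [hn, ← cs_comm_key, commutator_def]
      exact Subgroup.commutator_mem_commutator (Subgroup.mem_top _) (Subgroup.mem_top _)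
  refine ⟨hcomm, cs_bij, by decide, ?_⟩
  have hker : commutator CSP =
      (SemidirectProduct.rightHom : CSP →* Multiplicative ℤ).ker :=
    hcomm.trans SemidirectProduct.range_inl_eq_ker_rightHom
  exact ⟨(QuotientGroup.quotientMulEquivOfEq hker).trans
    (QuotientGroup.quotientKerEquivOfSurjective _ SemidirectProduct.rightHom_surjective)⟩
end

section
/- Let W be the group presented with generating set {aₙ : n ∈ ℤ} and relators aₙ⁻¹·aₙ₋₁⁻¹·aₙ·aₙ₊₁·aₙ₊₂ and aₙ⁻¹·aₙ₊₂·aₙ₊₃ for all n ∈ ℤ (i.e., the quotient of the free group on the aₙ by the normal closure of all these relators). Then W is free abelian of rank 3: there is an isomorphism W ≅ ℤ³ sending a₀, a₁, a₂ to the three standard basis vectors. -/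
/-- The relators `aₙ⁻¹·aₙ₋₁⁻¹·aₙ·aₙ₊₁·aₙ₊₂` and `aₙ⁻¹·aₙ₊₂·aₙ₊₃`, for all `n ∈ ℤ`,
in the free group on generators `{aₙ : n ∈ ℤ}`. -/
def wRels : Set (FreeGroup ℤ) :=
  {w | ∃ n : ℤ,
    w = (FreeGroup.of n)⁻¹ * (FreeGroup.of (n - 1))⁻¹ * FreeGroup.of n *
          FreeGroup.of (n + 1) * FreeGroup.of (n + 2) ∨
    w = (FreeGroup.of n)⁻¹ * FreeGroup.of (n + 2) * FreeGroup.of (n + 3)}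

/-- The group `W = ⟨aₙ (n ∈ ℤ) ∣ aₙ⁻¹aₙ₋₁⁻¹aₙaₙ₊₁aₙ₊₂, aₙ⁻¹aₙ₊₂aₙ₊₃ (n ∈ ℤ)⟩`. -/
abbrev W : Type := PresentedGroup wRels

namespace WAux

/-- The generators of `W`. -/
abbrev a (n : ℤ) : W := PresentedGroup.of n

lemma relW {r : FreeGroup ℤ} (hr : r ∈ wRels) : PresentedGroup.mk wRels r = 1 :=
  (QuotientGroup.eq_one_iff r).mpr (Subgroup.subset_normalClosure hr)

lemma mk_of (k : ℤ) : PresentedGroup.mk wRels (FreeGroup.of k) = a k := rfl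

lemma rel2 (n : ℤ) : a n = a (n + 2) * a (n + 3) := by
  have h := relW ⟨n, Or.inr rfl⟩
  rw [map_mul, map_mul, map_inv, mk_of, mk_of, mk_of] at h
  rw [mul_assoc] at h
  exact inv_mul_eq_one.mp h

lemma rel1 (n : ℤ) :
    (a n)⁻¹ * (a (n - 1))⁻¹ * a n * a (n + 1) * a (n + 2) = 1 := by
  have h := relW ⟨n, Or.inl rfl⟩
  rw [map_mul, map_mul, map_mul, map_mul, map_inv, map_inv] at h
  exact h

lemma rel2' (n : ℤ) : a (n - 1) = a (n + 1) * a (n + 2) := by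
  have h := rel2 (n - 1)
  rwa [show n - 1 + 2 = n + 1 by ring, show n - 1 + 3 = n + 2 by ring] at h

lemma comm_adjacent (n : ℤ) : Commute (a (n - 1)) (a n) := by
  have h := rel1 n
  rw [mul_assoc ((a n)⁻¹ * (a (n - 1))⁻¹ * a n), ← rel2' n] at h
  -- h : (a n)⁻¹ * (a (n-1))⁻¹ * a n * a (n-1) = 1
  have h2 : (a n)⁻¹ * ((a (n - 1))⁻¹ * (a n * a (n - 1))) = 1 := by
    rw [← mul_assoc, ← mul_assoc]; exact h
  have h3 : a n = (a (n - 1))⁻¹ * (a n * a (n - 1)) := inv_mul_eq_one.mp h2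
  have h4 : a (n - 1) * a n = a n * a (n - 1) := eq_inv_mul_iff_mul_eq.mp h3
  exact h4

lemma c01 : Commute (a 0) (a 1) := by
  have h := comm_adjacent 1; norm_num at h; exact h

lemma c12 : Commute (a 1) (a 2) := by
  have h := comm_adjacent 2; norm_num at h; exact h

lemma c02 : Commute (a 0) (a 2) := by
  have hm : a (-1 : ℤ) = a 1 * a 2 := by
    have h := rel2 (-1); norm_num at h; exact h
  have h0 : Commute (a 0) (a (-1 : ℤ)) := by
    have h := comm_adjacent 0; norm_num at h; exact h.symm
  rw [hm] at h0
  have : Commute (a 0) ((a 1)⁻¹ * (a 1 * a 2)) := c01.inv_right.mul_right h0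
  rwa [inv_mul_cancel_left] at this

lemma mem_cl (n : ℤ) : a n ∈ Subgroup.closure ({a 0, a 1, a 2} : Set W) := by
  set K := Subgroup.closure ({a 0, a 1, a 2} : Set W) with hK
  have h0 : a 0 ∈ K := Subgroup.subset_closure (by simp)
  have h1 : a 1 ∈ K := Subgroup.subset_closure (by simp)
  have h2 : a 2 ∈ K := Subgroup.subset_closure (by simp)
  have up : ∀ m : ℤ, a m ∈ K → a (m + 2) ∈ K → a (m + 3) ∈ K := by
    intro m hm hm2
    have : a (m + 3) = (a (m + 2))⁻¹ * a m := by
      rw [eq_inv_mul_iff_mul_eq]; exact (rel2 m).symm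
    rw [this]; exact mul_mem (inv_mem hm2) hm
  have down : ∀ m : ℤ, a (m + 1) ∈ K → a (m + 2) ∈ K → a (m - 1) ∈ K := by
    intro m hm1 hm2
    rw [rel2' m]; exact mul_mem hm1 hm2
  suffices H : ∀ m : ℤ, a m ∈ K ∧ a (m + 1) ∈ K ∧ a (m + 2) ∈ K by exact (H n).1
  intro m
  induction m using Int.induction_on with
  | zero => exact ⟨h0, by norm_num; exact h1, by norm_num; exact h2⟩
  | succ i ih =>
    obtain ⟨u0, u1, u2⟩ := ih
    refine ⟨u1, by rw [show (i : ℤ) + 1 + 1 = i + 2 by ring]; exact u2, ?_⟩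
    rw [show (i : ℤ) + 1 + 2 = i + 3 by ring]
    exact up i u0 u2
  | pred i ih =>
    obtain ⟨u0, u1, u2⟩ := ih
    refine ⟨?_, by rw [show -(i : ℤ) - 1 + 1 = -i by ring]; exact u0,
      by rw [show -(i : ℤ) - 1 + 2 = -i + 1 by ring]; exact u1⟩
    exact down (-i) u1 u2

lemma closure_top : Subgroup.closure ({a 0, a 1, a 2} : Set W) = ⊤ := by
  refine le_antisymm le_top ?_
  rw [← PresentedGroup.closure_range_of wRels]
  refine (Subgroup.closure_le _).mpr ?_
  rintro _ ⟨n, rfl⟩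
  exact mem_cl n

lemma comm_all (x y : W) : Commute x y := by
  have hx : x ∈ Subgroup.closure ({a 0, a 1, a 2} : Set W) := by
    rw [closure_top]; trivial
  have hy : y ∈ Subgroup.closure ({a 0, a 1, a 2} : Set W) := by
    rw [closure_top]; trivial
  refine Subgroup.closure_induction₂
    (p := fun x y _ _ => Commute x y) ?_ ?_ ?_ ?_ ?_ ?_ ?_ hx hy
  · intro s t hs ht
    simp only [Set.mem_insert_iff, Set.mem_singleton_iff] at hs ht
    rcases hs with rfl | rfl | rfl <;> rcases ht with rfl | rfl | rfl
    exacts [Commute.refl _, c01, c02, c01.symm, Commute.refl _, c12,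
      c02.symm, c12.symm, Commute.refl _]
  · intro x _; exact Commute.one_left x
  · intro x _; exact Commute.one_right x
  · intro x y z _ _ _ h1 h2; exact h1.mul_left h2
  · intro y z x _ _ _ h1 h2; exact h1.mul_right h2
  · intro x y _ _ h; exact h.inv_left
  · intro x y _ _ h; exact h.inv_right

instance : CommGroup W :=
  { (inferInstance : Group W) with mul_comm := fun x y => comm_all x y }

/-! ### The companion matrix of the recurrence `v n = v (n+2) + v (n+3)` -/

def Mu : (Matrix (Fin 3) (Fin 3) ℤ)ˣ :=
  ⟨Matrix.of ![![0, 1, 0], ![0, 0, 1], ![1, 0, -1]],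
   Matrix.of ![![0, 1, 1], ![1, 0, 0], ![0, 1, 0]],
   by decide, by decide⟩

/-- The image of the generator `aₙ` in `ℤ³`. -/
def v (n : ℤ) : Fin 3 → ℤ :=
  ((Mu ^ n : (Matrix (Fin 3) (Fin 3) ℤ)ˣ) : Matrix (Fin 3) (Fin 3) ℤ) 0

lemma Mu_sq : ((Mu ^ (2 : ℤ) : (Matrix (Fin 3) (Fin 3) ℤ)ˣ) : Matrix (Fin 3) (Fin 3) ℤ)
    = Matrix.of ![![0, 0, 1], ![1, 0, -1], ![-1, 1, 1]] := by
  rw [zpow_two, Units.val_mul]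
  decide

lemma Mu_cube : ((Mu ^ (3 : ℤ) : (Matrix (Fin 3) (Fin 3) ℤ)ˣ) : Matrix (Fin 3) (Fin 3) ℤ)
    = Matrix.of ![![1, 0, -1], ![-1, 1, 1], ![1, -1, 0]] := by
  rw [show (3 : ℤ) = 2 + 1 by norm_num, zpow_add, zpow_one, Units.val_mul, Mu_sq]
  decide

lemma v_shift (k n : ℤ) (i : Fin 3) :
    v (n + k) i = ∑ j, ((Mu ^ k : (Matrix (Fin 3) (Fin 3) ℤ)ˣ) : Matrix (Fin 3) (Fin 3) ℤ) 0 j *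
      ((Mu ^ n : (Matrix (Fin 3) (Fin 3) ℤ)ˣ) : Matrix (Fin 3) (Fin 3) ℤ) j i := by
  have h : Mu ^ (n + k) = Mu ^ k * Mu ^ n := by rw [add_comm, zpow_add]
  rw [v, h, Units.val_mul, Matrix.mul_apply]

lemma vrec (n : ℤ) : v n = v (n + 2) + v (n + 3) := by
  funext i
  rw [Pi.add_apply, v_shift 2 n i, v_shift 3 n i, Mu_sq, Mu_cube]
  show ((Mu ^ n : (Matrix (Fin 3) (Fin 3) ℤ)ˣ) : Matrix (Fin 3) (Fin 3) ℤ) 0 i = _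
  simp [Fin.sum_univ_three]

lemma v_zero : v 0 = Pi.single 0 1 := by
  unfold v; rw [zpow_zero, Units.val_one]; decide

lemma v_one : v 1 = Pi.single 1 1 := by
  unfold v; rw [zpow_one]; decide

lemma v_two : v 2 = Pi.single 2 1 := by
  unfold v; rw [Mu_sq]; decide

/-! ### The homomorphisms -/

def f (n : ℤ) : Multiplicative (Fin 3 → ℤ) := Multiplicative.ofAdd (v n)

lemma hrels : ∀ r ∈ wRels, FreeGroup.lift f r = 1 := by
  rintro r ⟨n, h | h⟩ <;> subst h <;>
    simp only [map_mul, map_inv, FreeGroup.lift_apply_of, f, ← ofAdd_neg, ← ofAdd_add,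
      ofAdd_eq_one]
  · have key : v (n - 1) = v (n + 1) + v (n + 2) := by
      have h := vrec (n - 1)
      rwa [show n - 1 + 2 = n + 1 by ring, show n - 1 + 3 = n + 2 by ring] at h
    rw [key]; abel
  · have h := vrec n
    rw [h]; abel

def φ : W →* Multiplicative (Fin 3 → ℤ) := PresentedGroup.toGroup hrels

lemma φ_of (n : ℤ) : φ (a n) = Multiplicative.ofAdd (v n) :=
  PresentedGroup.toGroup.of hrels

def g : Multiplicative (Fin 3 → ℤ) →* W :=
  MonoidHom.mk'
    (fun x => a 0 ^ (Multiplicative.toAdd x 0) * a 1 ^ (Multiplicative.toAdd x 1) *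
      a 2 ^ (Multiplicative.toAdd x 2))
    (by
      intro x y
      simp only [toAdd_mul, Pi.add_apply, zpow_add]
      rw [mul_mul_mul_comm (a 0 ^ Multiplicative.toAdd x 0) (a 0 ^ Multiplicative.toAdd y 0),
        mul_mul_mul_comm
          (a 0 ^ Multiplicative.toAdd x 0 * a 1 ^ Multiplicative.toAdd x 1)
          (a 0 ^ Multiplicative.toAdd y 0 * a 1 ^ Multiplicative.toAdd y 1)])

lemma g_apply (x : Fin 3 → ℤ) :
    g (Multiplicative.ofAdd x) = a 0 ^ (x 0) * a 1 ^ (x 1) * a 2 ^ (x 2) := rfl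

lemma g_v (n : ℤ) : g (Multiplicative.ofAdd (v n)) = a n := by
  have Grec : ∀ m : ℤ, g (Multiplicative.ofAdd (v m)) =
      g (Multiplicative.ofAdd (v (m + 2))) * g (Multiplicative.ofAdd (v (m + 3))) := by
    intro m
    rw [← map_mul, ← ofAdd_add, ← vrec]
  have base0 : g (Multiplicative.ofAdd (v 0)) = a 0 := by
    rw [v_zero, g_apply, Pi.single_eq_same, Pi.single_eq_of_ne (by decide : (1 : Fin 3) ≠ 0),
      Pi.single_eq_of_ne (by decide : (2 : Fin 3) ≠ 0)]
    simp
  have base1 : g (Multiplicative.ofAdd (v 1)) = a 1 := by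
    rw [v_one, g_apply, Pi.single_eq_same, Pi.single_eq_of_ne (by decide : (0 : Fin 3) ≠ 1),
      Pi.single_eq_of_ne (by decide : (2 : Fin 3) ≠ 1)]
    simp
  have base2 : g (Multiplicative.ofAdd (v 2)) = a 2 := by
    rw [v_two, g_apply, Pi.single_eq_same, Pi.single_eq_of_ne (by decide : (0 : Fin 3) ≠ 2),
      Pi.single_eq_of_ne (by decide : (1 : Fin 3) ≠ 2)]
    simp
  have up : ∀ m : ℤ, g (Multiplicative.ofAdd (v m)) = a m →
      g (Multiplicative.ofAdd (v (m + 2))) = a (m + 2) →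
      g (Multiplicative.ofAdd (v (m + 3))) = a (m + 3) := by
    intro m hm hm2
    have hG : g (Multiplicative.ofAdd (v (m + 3))) =
        (g (Multiplicative.ofAdd (v (m + 2))))⁻¹ * g (Multiplicative.ofAdd (v m)) := by
      rw [eq_inv_mul_iff_mul_eq]; exact (Grec m).symm
    have hA : a (m + 3) = (a (m + 2))⁻¹ * a m := by
      rw [eq_inv_mul_iff_mul_eq]; exact (rel2 m).symm
    rw [hG, hm, hm2, ← hA]
  have down : ∀ m : ℤ, g (Multiplicative.ofAdd (v (m + 1))) = a (m + 1) →
      g (Multiplicative.ofAdd (v (m + 2))) = a (m + 2) →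
      g (Multiplicative.ofAdd (v (m - 1))) = a (m - 1) := by
    intro m hm1 hm2
    have h := Grec (m - 1)
    rw [show m - 1 + 2 = m + 1 by ring, show m - 1 + 3 = m + 2 by ring] at h
    rw [h, hm1, hm2, ← rel2' m]
  suffices H : ∀ m : ℤ, g (Multiplicative.ofAdd (v m)) = a m ∧
      g (Multiplicative.ofAdd (v (m + 1))) = a (m + 1) ∧
      g (Multiplicative.ofAdd (v (m + 2))) = a (m + 2) by exact (H n).1
  intro m
  induction m using Int.induction_on with
  | zero => exact ⟨base0, by norm_num; exact base1, by norm_num; exact base2⟩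
  | succ i ih =>
    obtain ⟨u0, u1, u2⟩ := ih
    refine ⟨u1, by rw [show (i : ℤ) + 1 + 1 = i + 2 by ring]; exact u2, ?_⟩
    rw [show (i : ℤ) + 1 + 2 = i + 3 by ring]
    exact up i u0 u2
  | pred i ih =>
    obtain ⟨u0, u1, u2⟩ := ih
    refine ⟨?_, by rw [show -(i : ℤ) - 1 + 1 = -i by ring]; exact u0,
      by rw [show -(i : ℤ) - 1 + 2 = -i + 1 by ring]; exact u1⟩
    exact down (-i) u1 u2

lemma gφ_id : ∀ x : W, g (φ x) = x := by
  have h : g.comp φ = MonoidHom.id W := by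
    refine PresentedGroup.ext fun n => ?_
    simp only [MonoidHom.comp_apply, MonoidHom.id_apply]
    rw [show (PresentedGroup.of n : W) = a n from rfl, φ_of, g_v]
  intro x
  exact DFunLike.congr_fun h x

lemma φg_id : ∀ x : Multiplicative (Fin 3 → ℤ), φ (g x) = x := by
  intro x
  rw [show x = Multiplicative.ofAdd (Multiplicative.toAdd x) from rfl, g_apply]
  rw [map_mul, map_mul, map_zpow, map_zpow, map_zpow, φ_of, φ_of, φ_of, v_zero, v_one, v_two]
  rw [← ofAdd_zsmul, ← ofAdd_zsmul, ← ofAdd_zsmul, ← ofAdd_add, ← ofAdd_add]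
  congr 1
  funext i
  fin_cases i <;> simp [Pi.single_apply]

def ψ : W ≃* Multiplicative (Fin 3 → ℤ) :=
  { toFun := φ, invFun := g, left_inv := gφ_id, right_inv := φg_id,
    map_mul' := map_mul φ }

end WAux

/-- `W` is free abelian of rank 3: there is an isomorphism `W ≅ ℤ³` sending
`a₀, a₁, a₂` to the three standard basis vectors. -/
theorem W_free_abelian_rank_three :
    ∃ ψ : W ≃* Multiplicative (Fin 3 → ℤ),
      ψ (PresentedGroup.of 0) = Multiplicative.ofAdd (Pi.single 0 1) ∧
      ψ (PresentedGroup.of 1) = Multiplicative.ofAdd (Pi.single 1 1) ∧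
      ψ (PresentedGroup.of 2) = Multiplicative.ofAdd (Pi.single 2 1) := by
  refine ⟨WAux.ψ, ?_, ?_, ?_⟩
  · show WAux.φ (WAux.a 0) = _
    rw [WAux.φ_of, WAux.v_zero]
  · show WAux.φ (WAux.a 1) = _
    rw [WAux.φ_of, WAux.v_one]
  · show WAux.φ (WAux.a 2) = _
    rw [WAux.φ_of, WAux.v_two]
end
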